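/- arXiv:2501.19261 — 3 statements merged into one kernel-verified Lean document; each statement's English description precedes it below -/
import Mathlib

section
/- For n-qubit Pauli strings P, P' (tensor products of n single-qubit Pauli matrices, d = 2^n), the sum over all pairs (P,P') of Tr[(PP')^k] equals d^5 when k ≡ 0 (mod 4), and equals d^3 otherwise. -/
open Matrix Complex

noncomputable def pauli : Fin 4 → Matrix (Fin 2) (Fin 2) ℂ :=
  ![1, !![0, 1; 1, 0], !![0, -Complex.I; Complex.I, 0], !![1, 0; 0, -1]]

noncomputable def kron (n : ℕ) (f : Fin n → Matrix (Fin 2) (Fin 2) ℂ) :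
    Matrix (Fin n → Fin 2) (Fin n → Fin 2) ℂ :=
  Matrix.of fun i j => ∏ t, f t (i t) (j t)

lemma kron_mul (n : ℕ) (f g : Fin n → Matrix (Fin 2) (Fin 2) ℂ) :
    kron n f * kron n g = kron n (fun t => f t * g t) := by
  ext i j
  simp only [kron, Matrix.mul_apply, Matrix.of_apply]
  rw [Fintype.prod_sum (fun t x => f t (i t) x * g t x (j t))]
  exact Finset.sum_congr rfl fun x _ => (Finset.prod_mul_distrib).symm

lemma kron_one (n : ℕ) : kron n (fun _ => 1) = 1 := by
  ext i j
  simp only [kron, Matrix.of_apply, Matrix.one_apply]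
  by_cases h : i = j
  · simp [h]
  · obtain ⟨t, ht⟩ : ∃ t, i t ≠ j t := by
      by_contra hc; push_neg at hc; exact h (funext hc)
    rw [if_neg h]
    exact Finset.prod_eq_zero (Finset.mem_univ t) (by simp [Matrix.one_apply, ht])

lemma kron_pow (n : ℕ) (f : Fin n → Matrix (Fin 2) (Fin 2) ℂ) (k : ℕ) :
    (kron n f) ^ k = kron n (fun t => (f t) ^ k) := by
  induction k with
  | zero => simpa using (kron_one n).symm
  | succ m ih => simp [pow_succ, ih, kron_mul]

lemma kron_trace (n : ℕ) (f : Fin n → Matrix (Fin 2) (Fin 2) ℂ) :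
    Matrix.trace (kron n f) = ∏ t, Matrix.trace (f t) := by
  simp only [Matrix.trace, Matrix.diag, kron, Matrix.of_apply]
  rw [Fintype.prod_sum (fun t x => f t x x)]

lemma pauli_pow_four : ∀ α β : Fin 4, (pauli α * pauli β) ^ 4 = 1 := by
  intro α β
  fin_cases α <;> fin_cases β <;>
    simp [pauli, pow_succ, Matrix.one_fin_two, Matrix.mul_fin_two]

lemma pauli_sum_trace :
    (∑ α : Fin 4, ∑ β : Fin 4, Matrix.trace ((pauli α * pauli β) ^ 0)) = 32 ∧
    (∑ α : Fin 4, ∑ β : Fin 4, Matrix.trace ((pauli α * pauli β) ^ 1)) = 8 ∧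
    (∑ α : Fin 4, ∑ β : Fin 4, Matrix.trace ((pauli α * pauli β) ^ 2)) = 8 ∧
    (∑ α : Fin 4, ∑ β : Fin 4, Matrix.trace ((pauli α * pauli β) ^ 3)) = 8 := by
  refine ⟨?_, ?_, ?_, ?_⟩ <;>
    simp [Fin.sum_univ_four, pauli, pow_succ, Matrix.trace_fin_two,
      Matrix.mul_fin_two, Matrix.one_fin_two] <;> norm_num

/-- The `n`-qubit Pauli string `σ^{a 1} ⊗ ⋯ ⊗ σ^{a n}` as a matrix. -/
noncomputable def pauliString (n : ℕ) (a : Fin n → Fin 4) :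
    Matrix (Fin n → Fin 2) (Fin n → Fin 2) ℂ :=
  Matrix.of fun i j => ∏ t, pauli (a t) (i t) (j t)

lemma pauli_mul_pow_mod (α β : Fin 4) (k : ℕ) :
    (pauli α * pauli β) ^ k = (pauli α * pauli β) ^ (k % 4) := by
  conv_lhs => rw [← Nat.div_add_mod k 4]
  rw [pow_add, pow_mul, pauli_pow_four, one_pow, one_mul]

lemma key (n k : ℕ) :
    (∑ a : Fin n → Fin 4, ∑ b : Fin n → Fin 4,
        Matrix.trace ((pauliString n a * pauliString n b) ^ k)) =
      (∑ α : Fin 4, ∑ β : Fin 4,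
        Matrix.trace ((pauli α * pauli β) ^ (k % 4))) ^ n := by
  have hP : ∀ a : Fin n → Fin 4, pauliString n a = kron n (fun t => pauli (a t)) :=
    fun a => rfl
  have h1 : ∀ a b : Fin n → Fin 4,
      Matrix.trace ((pauliString n a * pauliString n b) ^ k) =
      ∏ t, Matrix.trace ((pauli (a t) * pauli (b t)) ^ (k % 4)) := by
    intro a b
    rw [hP, hP, kron_mul, kron_pow, kron_trace]
    exact Finset.prod_congr rfl fun t _ => by rw [pauli_mul_pow_mod]
  simp only [h1]
  rw [← Fintype.sum_prod_type', ← Fintype.sum_prod_type']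
  rw [Fintype.sum_pow (fun p : Fin 4 × Fin 4 =>
    Matrix.trace ((pauli p.1 * pauli p.2) ^ (k % 4)))]
  exact Fintype.sum_equiv (Equiv.arrowProdEquivProdArrow (Fin n) (fun _ => Fin 4) (fun _ => Fin 4)).symm
    _ _ fun c => rfl

theorem pauli_string_pair_trace_power_sum (n k : ℕ) (hk : 1 ≤ k) :
    (4 ∣ k →
      (∑ a : Fin n → Fin 4, ∑ b : Fin n → Fin 4,
          Matrix.trace ((pauliString n a * pauliString n b) ^ k)) = ((2 : ℂ) ^ n) ^ 5) ∧
    (¬ (4 ∣ k) →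
      (∑ a : Fin n → Fin 4, ∑ b : Fin n → Fin 4,
          Matrix.trace ((pauliString n a * pauliString n b) ^ k)) = ((2 : ℂ) ^ n) ^ 3) := by
  obtain ⟨h0, h1, h2, h3⟩ := pauli_sum_trace
  constructor
  · intro h
    obtain ⟨c, rfl⟩ := h
    rw [key, Nat.mul_mod_right, h0, ← pow_mul, show n * 5 = 5 * n by ring, pow_mul]
    norm_num
  · intro h
    have hm : k % 4 = 1 ∨ k % 4 = 2 ∨ k % 4 = 3 := by omega
    have h8 : ((2 : ℂ) ^ n) ^ 3 = 8 ^ n := by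
      rw [← pow_mul, show n * 3 = 3 * n by ring, pow_mul]; norm_num
    rcases hm with hm | hm | hm <;> rw [key, hm, h8]
    · rw [h1]
    · rw [h2]
    · rw [h3]
end

section
/- (Bhatia–Davis inequality) Let X be a real random variable with m ≤ X ≤ M almost surely and mean μ = E[X]. Then Var(X) ≤ (M − μ)(μ − m). -/
open MeasureTheory ProbabilityTheory

/-- Bhatia–Davis inequality: if `m ≤ X ≤ M` almost surely, then
`Var(X) ≤ (M − E[X])(E[X] − m)`. -/
theorem bhatia_davis {Ω : Type*} [MeasurableSpace Ω] (μ : Measure Ω)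
    [IsProbabilityMeasure μ] (X : Ω → ℝ) (hX : Measurable X) (m M : ℝ)
    (hbound : ∀ᵐ ω ∂μ, X ω ∈ Set.Icc m M) :
    variance X μ ≤ (M - ∫ ω, X ω ∂μ) * ((∫ ω, X ω ∂μ) - m) := by
  have hmem : MemLp X 2 μ := memLp_of_bounded hbound hX.aestronglyMeasurable 2
  have hint : Integrable X μ := hmem.integrable (by norm_num)
  have hint2 : Integrable (fun ω => X ω ^ 2) μ := hmem.integrable_sq
  rw [variance_eq_sub hmem]
  have key : (0:ℝ) ≤ ∫ ω, (M - X ω) * (X ω - m) ∂μ := by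
    apply integral_nonneg_of_ae
    filter_upwards [hbound] with ω hω
    exact mul_nonneg (by linarith [hω.2]) (by linarith [hω.1])
  have heq : ∫ ω, (M - X ω) * (X ω - m) ∂μ
      = (M + m) * (∫ ω, X ω ∂μ) - M * m - ∫ ω, X ω ^ 2 ∂μ := by
    have : ∀ ω, (M - X ω) * (X ω - m) = (M + m) * X ω - M * m - X ω ^ 2 := by
      intro ω; ring
    simp_rw [this]
    rw [integral_sub (by exact (hint.const_mul _).sub (integrable_const _)) hint2,
      integral_sub (hint.const_mul _) (integrable_const _), integral_const_mul]
    simp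
  rw [heq] at key
  simp only [Pi.pow_apply]
  nlinarith [key]
end

section
/- The 2-stabilizer Rényi entropy of the single-qubit golden state equals log(3/2): with G = (1/2)(I + (X+Y+Z)/√3), one has (1/2)Σ_{P∈{I,X,Y,Z}} Tr⁴(P·G) = 2/3, hence M₂(G) = −log[(1/2)Σ_P Tr⁴(P G)] = log(3/2). -/
open Matrix Complex

noncomputable def goldenState : Matrix (Fin 2) (Fin 2) ℂ :=
  (1 / 2 : ℂ) • (1 + ((Real.sqrt 3 : ℂ))⁻¹ • (pauli 1 + pauli 2 + pauli 3))

theorem goldenState_stabilizer_entropy :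
    (1 / 2 : ℂ) * ∑ a : Fin 4, (Matrix.trace (pauli a * goldenState)) ^ 4 = 2 / 3 ∧
    -Real.log (2 / 3) = Real.log (3 / 2) := by
  constructor
  · have hs : ((Real.sqrt 3 : ℝ) : ℂ) ≠ 0 := by
      exact_mod_cast Real.sqrt_ne_zero'.mpr (by norm_num)
    have hsq : ((Real.sqrt 3 : ℝ) : ℂ) ^ 2 = 3 := by
      rw [← Complex.ofReal_pow, Real.sq_sqrt (by norm_num)]
      norm_num
    rw [Fin.sum_univ_four]
    simp only [pauli, goldenState, Matrix.cons_val_zero, Matrix.cons_val_one, Matrix.head_cons,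
      Matrix.cons_val_two, Matrix.cons_val_three, Matrix.tail_cons,
      Matrix.trace_fin_two, Matrix.mul_apply, Fin.sum_univ_two, Matrix.smul_apply,
      Matrix.add_apply, Matrix.one_apply, Matrix.cons_val', Matrix.empty_val',
      Matrix.cons_val_fin_one, Matrix.one_fin_two, smul_eq_mul]
    norm_num
    field_simp
    ring_nf
    have h12 : ((Real.sqrt 3 : ℝ) : ℂ) ^ 12 = 729 := by
      rw [show (12:ℕ) = 2*6 from rfl, pow_mul, hsq]; norm_num
    have h16 : ((Real.sqrt 3 : ℝ) : ℂ) ^ 16 = 6561 := by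
      rw [show (16:ℕ) = 2*8 from rfl, pow_mul, hsq]; norm_num
    have hi : ((Real.sqrt 3 : ℝ) : ℂ)⁻¹ ^ 16 = (6561 : ℂ)⁻¹ := by
      rw [inv_pow, h16]
    have hI : Complex.I ^ 8 = 1 := by
      rw [show (8:ℕ) = 2*4 from rfl, pow_mul, Complex.I_sq]; norm_num
    rw [show ((Real.sqrt 3 : ℝ) : ℂ) ^ 4 = 9 by rw [show (4:ℕ) = 2*2 from rfl, pow_mul, hsq]; norm_num, hI]
    norm_num
  · rw [← Real.log_inv]
    norm_num
end
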